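/- Let Z be an n-dimensional naturally graded p-filiform complex Zinbiel algebra of first type with n−p ≥ 3, adapted basis {e_1,…,e_{n−p},f_1,…,f_p}, and suppose r_i = 1 for all 1 ≤ i ≤ p (all f_i lie in the first graded component Z_1). Then every f_i (1 ≤ i ≤ p) lies in the center Cent(Z); in particular f_i ∘ e_j = 0 and e_j ∘ f_i = 0 for all 1 ≤ j ≤ n−p, and f_i ∘ f_j = 0 for all 1 ≤ i, j ≤ p. -/

import Mathlib

open Module Submodule

/-- The Zinbiel identity for a bilinear operation `mul` on a complex vector space:
`(x∘y)∘z = x∘(y∘z) + x∘(z∘y)`. -/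
def IsZinbiel {Z : Type*} [AddCommGroup Z] [Module ℂ Z] (mul : Z →ₗ[ℂ] Z →ₗ[ℂ] Z) : Prop :=
  ∀ x y z : Z, mul (mul x y) z = mul x (mul y z) + mul x (mul z y)
/-- The square `Z ∘ Z` of the algebra. -/
def algSq {Z : Type*} [AddCommGroup Z] [Module ℂ Z] (mul : Z →ₗ[ℂ] Z →ₗ[ℂ] Z) :
    Submodule ℂ Z :=
  Submodule.span ℂ {z | ∃ x y, z = mul x y}
/-- `C(Z) = (n-p, 1, …, 1)` (`p`-filiformity) expressed via the left multiplication
operators: for every `x ∉ Z²` the nilpotent operator `L_x` satisfies `L_x^(n-p) = 0`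
and has rank at most `n-p-1`; this says exactly that the Jordan type of every `L_x`
is lexicographically at most `(n-p, 1, …, 1)`. -/
def CharSeqMax {Z : Type*} [AddCommGroup Z] [Module ℂ Z]
    (mul : Z →ₗ[ℂ] Z →ₗ[ℂ] Z) (n p : ℕ) : Prop :=
  ∀ x : Z, x ∉ algSq mul →
    ((mul x : Module.End ℂ Z) ^ (n - p) = 0) ∧
      Module.finrank ℂ (LinearMap.range (mul x)) ≤ n - p - 1
/-- The adapted family `e_1, …, e_m, f_1, …, f_p` indexed by `Fin m ⊕ Fin p`. -/
def adaptedFam {Z : Type*} (m p : ℕ) (e f : ℕ → Z) : Fin m ⊕ Fin p → Z :=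
  Sum.elim (fun i => e ((i : ℕ) + 1)) (fun j => f ((j : ℕ) + 1))

/-- If `n - p ≥ 3` and all the `f_i` lie in the first component `Z_1` of the natural
gradation, then every `f_i` lies in the center: `f_i ∘ y = y ∘ f_i = 0` for all `y`;
in particular `f_i ∘ e_j = e_j ∘ f_i = 0` and `f_i ∘ f_j = 0`. -/
theorem graded_p_filiform_all_r_one_central
    {Z : Type*} [AddCommGroup Z] [Module ℂ Z]
    (mul : Z →ₗ[ℂ] Z →ₗ[ℂ] Z) (hzin : IsZinbiel mul)
    (n p : ℕ) (hpn : p < n)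
    (e f : ℕ → Z)
    -- `{e_1, …, e_{n-p}, f_1, …, f_p}` is a basis of the `n`-dimensional algebra `Z`
    (hli : LinearIndependent ℂ (adaptedFam (n - p) p e f))
    (hsp : Submodule.span ℂ (Set.range (adaptedFam (n - p) p e f)) = ⊤)
    -- the basis is adapted of first type: `e_1 ∘ e_i = e_{i+1}`, `e_1 ∘ e_{n-p} = 0`,
    -- `e_1 ∘ f_j = 0`
    (hee : ∀ i, 1 ≤ i → i ≤ n - p - 1 → mul (e 1) (e i) = e (i + 1))
    (hetop : mul (e 1) (e (n - p)) = 0)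
    (hef : ∀ j, 1 ≤ j → j ≤ p → mul (e 1) (f j) = 0)
    -- the natural gradation `Z = Z_1 ⊕ ⋯ ⊕ Z_{n-p}` : `W i` is the `i`-th component,
    -- the gradation is multiplicative and generated in degree one
    -- (`Z_{i+1} = Z_1 ∘ Z_i`, coming from `Z_i = Z^i/Z^{i+1}`), and `e_i ∈ Z_i`
    (W : ℕ → Submodule ℂ Z)
    (hW0 : W 0 = ⊥)
    (hWhigh : ∀ i, n - p < i → W i = ⊥)
    (hWint : DirectSum.IsInternal W)
    (hWmul : ∀ i j, ∀ x ∈ W i, ∀ y ∈ W j, mul x y ∈ W (i + j))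
    (hWgen : ∀ i, 1 ≤ i → W (i + 1) = Submodule.span ℂ {z | ∃ x ∈ W 1, ∃ y ∈ W i, z = mul x y})
    (heW : ∀ i, 1 ≤ i → i ≤ n - p → e i ∈ W i)
    -- `Z` is `p`-filiform with characteristic vector `e_1 ∉ Z²`
    (hfil : CharSeqMax mul n p)
    (he1sq : e 1 ∉ algSq mul)
    (h3 : 3 ≤ n - p)
    (hfW1 : ∀ i, 1 ≤ i → i ≤ p → f i ∈ W 1) :
    ∀ i, 1 ≤ i → i ≤ p →
      (∀ y : Z, mul (f i) y = 0 ∧ mul y (f i) = 0) ∧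
      (∀ j, 1 ≤ j → j ≤ n - p → mul (f i) (e j) = 0 ∧ mul (e j) (f i) = 0) ∧
      (∀ j, 1 ≤ j → j ≤ p → mul (f i) (f j) = 0) := by
  classical
  -- Basic multiplication facts
  have he2 : mul (e 1) (e 1) = e 2 := hee 1 le_rfl (by omega)
  have he3 : mul (e 1) (e 2) = e 3 := hee 2 (by omega) (by omega)
  have he3ne : e 3 ≠ 0 := by
    have h := hli.ne_zero (Sum.inl ⟨2, by omega⟩)
    simpa [adaptedFam] using h
  -- the basis
  let B : Basis (Fin (n - p) ⊕ Fin p) ℂ Z := Basis.mk hli (by rw [hsp])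
  have hBa : ∀ k, B k = adaptedFam (n - p) p e f k := fun k => by
    simp [B, Basis.mk_apply]
  -- W 2 is spanned by e 2
  have hW2 : ∀ w ∈ W 2, ∃ c : ℂ, w = c • e 2 := by
    intro w hw
    set i₂ : Fin (n - p) ⊕ Fin p := Sum.inl ⟨1, by omega⟩ with hi₂
    refine ⟨B.repr w i₂, ?_⟩
    have hBi₂ : B i₂ = e 2 := by rw [hBa]; simp [hi₂, adaptedFam]
    have hsum : w - B.repr w i₂ • e 2 = ∑ k ∈ Finset.univ.erase i₂, B.repr w k • B k := by
      rw [← hBi₂, sub_eq_iff_eq_add, Finset.sum_erase_add _ _ (Finset.mem_univ i₂)]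
      exact (B.sum_repr w).symm
    have hmemT : w - B.repr w i₂ • e 2 ∈ ⨆ j, ⨆ (_ : j ≠ 2), W j := by
      rw [hsum]
      refine Submodule.sum_mem _ ?_
      intro k hk
      refine Submodule.smul_mem _ _ ?_
      rcases k with a | b
      · have halt := a.isLt
        have ha : (a : ℕ) + 1 ≠ 2 := by
          intro hcon
          exact (Finset.ne_of_mem_erase hk) (by rw [hi₂]; congr 1; exact Fin.ext (show (a:ℕ) = 1 by omega))
        have hmem : e ((a : ℕ) + 1) ∈ W ((a : ℕ) + 1) := heW _ (by omega) (by omega)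
        have hBk : B (Sum.inl a) = e ((a : ℕ) + 1) := by rw [hBa]; simp [adaptedFam]
        rw [hBk]
        exact Submodule.mem_iSup_of_mem _ (Submodule.mem_iSup_of_mem ha hmem)
      · have hblt := b.isLt
        have hBk : B (Sum.inr b) = f ((b : ℕ) + 1) := by rw [hBa]; simp [adaptedFam]
        rw [hBk]
        have hmem : f ((b : ℕ) + 1) ∈ W 1 := hfW1 _ (by omega) (by omega)
        exact Submodule.mem_iSup_of_mem _
          (Submodule.mem_iSup_of_mem (by omega : (1 : ℕ) ≠ 2) hmem)
    have hw' : w - B.repr w i₂ • e 2 ∈ W 2 :=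
      sub_mem hw (Submodule.smul_mem _ _ (heW 2 (by omega) (by omega)))
    have h0 : w - B.repr w i₂ • e 2 = 0 :=
      (Submodule.disjoint_def.mp (hWint.submodule_iSupIndep 2)) _ hw' hmemT
    exact (sub_eq_zero.mp h0)
  -- e_k ∘ e_1 = k • e_{k+1}
  have heke1 : ∀ k, 1 ≤ k → k ≤ n - p - 1 → mul (e k) (e 1) = (k : ℂ) • e (k + 1) := by
    intro k hk1
    induction k, hk1 using Nat.le_induction with
    | base => intro _; simpa using he2
    | succ k hk ih =>
      intro hk2
      have hke : mul (e 1) (e k) = e (k + 1) := hee k hk (by omega)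
      have ih' := ih (by omega)
      have hnext : mul (e 1) (e (k + 1)) = e (k + 1 + 1) := hee (k + 1) (by omega) (by omega)
      calc mul (e (k + 1)) (e 1) = mul (mul (e 1) (e k)) (e 1) := by rw [hke]
        _ = mul (e 1) (mul (e k) (e 1)) + mul (e 1) (mul (e 1) (e k)) := hzin _ _ _
        _ = (k : ℂ) • e (k + 1 + 1) + e (k + 1 + 1) := by
            rw [ih', hke, map_smul, hnext]
        _ = ((k + 1 : ℕ) : ℂ) • e (k + 1 + 1) := by push_cast; rw [add_smul, one_smul]
  -- f_i ∘ e_1 = 0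
  have hfe1 : ∀ i, 1 ≤ i → i ≤ p → mul (f i) (e 1) = 0 := by
    intro i hi1 hip
    obtain ⟨c, hc⟩ := hW2 (mul (f i) (e 1))
      (hWmul 1 1 _ (hfW1 i hi1 hip) _ (heW 1 (by omega) (by omega)))
    have h := hzin (e 1) (f i) (e 1)
    rw [hef i hi1 hip] at h
    simp only [map_zero, LinearMap.zero_apply, add_zero] at h
    rw [hc, map_smul, he3] at h
    have hc0 : c = 0 := by
      rcases smul_eq_zero.mp h.symm with h' | h'
      · exact h'
      · exact absurd h' he3ne
    rw [hc, hc0, zero_smul]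
  -- f_i ∘ e_k = 0 for all 1 ≤ k ≤ n - p
  have hfek : ∀ i, 1 ≤ i → i ≤ p → ∀ k, 1 ≤ k → k ≤ n - p → mul (f i) (e k) = 0 := by
    intro i hi1 hip k hk1 hkm
    rcases Nat.lt_or_ge k 2 with h2 | h2
    · have : k = 1 := by omega
      rw [this]; exact hfe1 i hi1 hip
    · obtain ⟨k', rfl⟩ : ∃ k', k = k' + 1 := ⟨k - 1, by omega⟩
      have hk'1 : 1 ≤ k' := by omega
      have h1 := hzin (f i) (e 1) (e k')
      rw [hfe1 i hi1 hip, hee k' hk'1 (by omega), heke1 k' hk'1 (by omega)] at h1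
      simp only [map_zero, LinearMap.zero_apply, map_smul] at h1
      have h2' : ((k' : ℂ) + 1) • mul (f i) (e (k' + 1)) = 0 := by
        rw [add_smul, one_smul, add_comm]
        exact h1.symm
      have hne : ((k' : ℂ) + 1) ≠ 0 := by
        have : ((k' + 1 : ℕ) : ℂ) ≠ 0 := Nat.cast_ne_zero.mpr (by omega)
        push_cast at this
        exact this
      rcases smul_eq_zero.mp h2' with h' | h'
      · exact absurd h' hne
      · exact h'
  -- e_k ∘ f_i = 0 for all 1 ≤ k ≤ n - p
  have hekf : ∀ i, 1 ≤ i → i ≤ p → ∀ k, 1 ≤ k → k ≤ n - p → mul (e k) (f i) = 0 := by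
    intro i hi1 hip k hk1
    induction k, hk1 using Nat.le_induction with
    | base => intro _; exact hef i hi1 hip
    | succ k hk ih =>
      intro hkm
      have h1 := hzin (e 1) (e k) (f i)
      rw [hee k hk (by omega), ih (by omega),
        hfek i hi1 hip k hk (by omega)] at h1
      simpa using h1
  -- f_i ∘ f_j = 0
  have hff : ∀ i, 1 ≤ i → i ≤ p → ∀ j, 1 ≤ j → j ≤ p → mul (f i) (f j) = 0 := by
    intro i hi1 hip j hj1 hjp
    obtain ⟨c, hc⟩ := hW2 (mul (f i) (f j))
      (hWmul 1 1 _ (hfW1 i hi1 hip) _ (hfW1 j hj1 hjp))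
    have h1 := hzin (f i) (f j) (e 1)
    rw [hc, hfe1 j hj1 hjp, hef j hj1 hjp, map_zero, map_smul,
      LinearMap.smul_apply, heke1 2 (by omega) (by omega)] at h1
    rw [add_zero, smul_smul] at h1
    have h3e : (2 + 1 : ℕ) = 3 := rfl
    rw [h3e] at h1
    have hc0 : c = 0 := by
      rcases smul_eq_zero.mp h1 with h' | h'
      · have : ((2 : ℕ) : ℂ) ≠ 0 := by norm_num
        exact (mul_eq_zero.mp h').resolve_right this
      · exact absurd h' he3ne
    rw [hc, hc0, zero_smul]
  -- assemble
  intro i hi1 hip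
  have hy : ∀ y : Z, mul (f i) y = 0 ∧ mul y (f i) = 0 := by
    have hker1 : Submodule.span ℂ (Set.range (adaptedFam (n - p) p e f)) ≤
        LinearMap.ker (mul (f i)) := by
      rw [Submodule.span_le]
      rintro _ ⟨k, rfl⟩
      rcases k with a | b
      · have := a.isLt
        simp only [adaptedFam, Sum.elim_inl, SetLike.mem_coe, LinearMap.mem_ker]
        exact hfek i hi1 hip _ (by omega) (by omega)
      · have := b.isLt
        simp only [adaptedFam, Sum.elim_inr, SetLike.mem_coe, LinearMap.mem_ker]
        exact hff i hi1 hip _ (by omega) (by omega)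
    have hker2 : Submodule.span ℂ (Set.range (adaptedFam (n - p) p e f)) ≤
        LinearMap.ker (mul.flip (f i)) := by
      rw [Submodule.span_le]
      rintro _ ⟨k, rfl⟩
      rcases k with a | b
      · have := a.isLt
        simp only [adaptedFam, Sum.elim_inl, SetLike.mem_coe, LinearMap.mem_ker,
          LinearMap.flip_apply]
        exact hekf i hi1 hip _ (by omega) (by omega)
      · have := b.isLt
        simp only [adaptedFam, Sum.elim_inr, SetLike.mem_coe, LinearMap.mem_ker,
          LinearMap.flip_apply]
        exact hff _ (by omega) (by omega) i hi1 hip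
    intro y
    have hyt : y ∈ Submodule.span ℂ (Set.range (adaptedFam (n - p) p e f)) := by
      rw [hsp]; exact Submodule.mem_top
    constructor
    · exact LinearMap.mem_ker.mp (hker1 hyt)
    · have := LinearMap.mem_ker.mp (hker2 hyt)
      rwa [LinearMap.flip_apply] at this
  exact ⟨hy, fun j hj1 hjm => ⟨(hy (e j)).1, (hy (e j)).2⟩,
    fun j hj1 hjp => (hy (f j)).1⟩
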